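/- arXiv:2509.24056 — 2 statements merged into one kernel-verified Lean document; each statement's English description precedes it below -/
import Mathlib

section
/- Let η > 0 with η ≤ 1, and let s, t be natural numbers with s ≤ t−1. Then ∏_{τ=s}^{t−1} (1 − η/√(τ+1)) ≤ exp(−η·(√t − √(s+1))). -/
lemma sqrt_succ_sub_le (x : ℝ) (hx : 1 ≤ x) :
    Real.sqrt (x + 1) - Real.sqrt x ≤ 1 / Real.sqrt x := by
  have hx0 : (0:ℝ) < x := by linarith
  have hs : 0 < Real.sqrt x := Real.sqrt_pos.mpr hx0
  have h1 : Real.sqrt (x + 1) ≤ Real.sqrt x + 1 / Real.sqrt x := by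
    rw [show Real.sqrt x + 1 / Real.sqrt x = Real.sqrt ((Real.sqrt x + 1 / Real.sqrt x)^2) by
      rw [Real.sqrt_sq (by positivity)]]
    apply Real.sqrt_le_sqrt
    have hsq : Real.sqrt x ^ 2 = x := Real.sq_sqrt hx0.le
    have hm : Real.sqrt x * (1 / Real.sqrt x) = 1 := mul_one_div_cancel hs.ne'
    have h2 : (0:ℝ) < 1 / x := by positivity
    nlinarith [hsq, hm, sq_nonneg (1 / Real.sqrt x)]
  linarith

lemma sum_inv_sqrt_ge (s : ℕ) : ∀ n : ℕ, s ≤ n →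
    Real.sqrt (n + 2) - Real.sqrt (s + 1) ≤
      ∑ τ ∈ Finset.Icc s n, 1 / Real.sqrt (τ + 1) := by
  intro n
  induction n with
  | zero =>
    intro hs
    interval_cases s
    simp only [Finset.Icc_self, Finset.sum_singleton]
    have := sqrt_succ_sub_le 1 le_rfl
    norm_num at this ⊢
  | succ n ih =>
    intro hs
    rcases Nat.lt_or_ge s (n+1) with h | h
    · have hsn : s ≤ n := Nat.lt_succ_iff.mp h
      rw [Finset.sum_Icc_succ_top (Nat.le_succ_of_le hsn)]
      have h1 := ih hsn
      have h2 := sqrt_succ_sub_le ((n:ℝ) + 2) (by have : (0:ℝ) ≤ n := Nat.cast_nonneg n; linarith)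
      push_cast
      push_cast at h1 h2
      have : ((n:ℝ) + 1 + 2) = (n + 2) + 1 := by ring
      rw [this]
      have : ((n:ℝ) + 1 + 1) = (n + 2) := by ring
      rw [this]
      linarith
    · have : s = n + 1 := le_antisymm hs h
      subst this
      simp only [Finset.Icc_self, Finset.sum_singleton]
      have h2 := sqrt_succ_sub_le ((n:ℝ) + 2) (by have : (0:ℝ) ≤ n := Nat.cast_nonneg n; linarith)
      push_cast
      have e1 : ((n:ℝ) + 1 + 2) = (n + 2) + 1 := by ring
      have e2 : ((n:ℝ) + 1 + 1) = (n + 2) := by ring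
      rw [e1, e2]
      linarith

/-- `∏_{τ=s}^{t-1} (1 - η/√(τ+1)) ≤ exp(-η (√t - √(s+1)))` for `0 < η ≤ 1` and `s ≤ t - 1`. -/
theorem prod_one_sub_eta_div_sqrt_le
    (η : ℝ) (hη0 : 0 < η) (hη1 : η ≤ 1) (s t : ℕ) (hst : s ≤ t - 1) :
    ∏ τ ∈ Finset.Icc s (t - 1), (1 - η / Real.sqrt (τ + 1)) ≤
      Real.exp (-η * (Real.sqrt t - Real.sqrt (s + 1))) := by
  have key : ∀ τ : ℕ, 0 ≤ 1 - η / Real.sqrt (τ + 1) := by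
    intro τ
    have h1 : (1:ℝ) ≤ Real.sqrt (τ + 1) := by
      have h := Real.sqrt_le_sqrt (show (1:ℝ) ≤ τ + 1 by
        have : (0:ℝ) ≤ τ := Nat.cast_nonneg τ; linarith)
      simpa using h
    have hpos : 0 < Real.sqrt ((τ:ℝ) + 1) := by linarith
    have : η / Real.sqrt (τ + 1) ≤ 1 := by
      rw [div_le_one hpos]; linarith
    linarith
  calc ∏ τ ∈ Finset.Icc s (t - 1), (1 - η / Real.sqrt (τ + 1))
      ≤ ∏ τ ∈ Finset.Icc s (t - 1), Real.exp (-(η / Real.sqrt (τ + 1))) := by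
        apply Finset.prod_le_prod
        · intro τ _; exact key τ
        · intro τ _
          have := Real.add_one_le_exp (-(η / Real.sqrt (τ + 1)))
          linarith
    _ = Real.exp (∑ τ ∈ Finset.Icc s (t - 1), -(η / Real.sqrt (τ + 1))) := by
        rw [Real.exp_sum]
    _ ≤ Real.exp (-η * (Real.sqrt t - Real.sqrt (s + 1))) := by
        apply Real.exp_le_exp.mpr
        have hsum := sum_inv_sqrt_ge s (t - 1) hst
        have hle : Real.sqrt t ≤ Real.sqrt ((t - 1 : ℕ) + 2) := by
          apply Real.sqrt_le_sqrt
          have : t ≤ (t - 1) + 2 := by omega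
          exact_mod_cast this
        have h1 : Real.sqrt t - Real.sqrt (s + 1) ≤
            ∑ τ ∈ Finset.Icc s (t - 1), 1 / Real.sqrt (τ + 1) := by linarith
        have h2 : ∑ τ ∈ Finset.Icc s (t - 1), -(η / Real.sqrt (τ + 1)) =
            -η * ∑ τ ∈ Finset.Icc s (t - 1), 1 / Real.sqrt (τ + 1) := by
          rw [Finset.mul_sum]
          apply Finset.sum_congr rfl
          intro τ _
          field_simp
        rw [h2]
        have hpos : 0 ≤ ∑ τ ∈ Finset.Icc s (t - 1), 1 / Real.sqrt (τ + 1) := by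
          apply Finset.sum_nonneg
          intro τ _
          positivity
        nlinarith
end

section
/- Let A ∈ ℝ^{m×m} be a matrix such that every (nonempty) principal square submatrix A_{II} (rows and columns indexed by the same set I ⊆ {1,…,m}) has smallest singular value at least c > 0. Let q ∈ ℝᵐ and suppose (λ, s) ∈ ℝᵐ × ℝᵐ satisfies A·λ + q = s, λ ≥ 0 (entrywise), s ≥ 0 (entrywise), and λᵀs = 0. Then ‖λ‖ ≤ ‖q‖/c. -/
noncomputable section

/-- `Vec m` is Euclidean space `ℝᵐ`. -/
abbrev Vec (m : ℕ) := EuclideanSpace ℝ (Fin m)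

/-- **Multiplier bound for the linear complementarity system.**
If every nonempty principal submatrix `A_{II}` of `A` has smallest singular value at least
`c > 0` (i.e. `‖A_{II} v‖ ≥ c ‖v‖` for all `v`), and `(λ, s)` solves
`A λ + q = s, λ ≥ 0, s ≥ 0, λᵀ s = 0`, then `‖λ‖ ≤ ‖q‖ / c`. -/
theorem lcp_multiplier_norm_bound
    (m : ℕ) (A : Matrix (Fin m) (Fin m) ℝ) (c : ℝ) (hc : 0 < c)
    (hsub : ∀ I : Finset (Fin m), I.Nonempty →
      ∀ v : EuclideanSpace ℝ {i // i ∈ I},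
        c * ‖v‖ ≤ ‖Matrix.toEuclideanLin
          (A.submatrix (fun i : {i // i ∈ I} => (i : Fin m)) fun i : {i // i ∈ I} => (i : Fin m))
          v‖)
    (q lam s : Vec m)
    (hsys : Matrix.toEuclideanLin A lam + q = s)
    (hlam : ∀ j, 0 ≤ lam j) (hs : ∀ j, 0 ≤ s j)
    (hcs : ∑ j, lam j * s j = 0) :
    ‖lam‖ ≤ ‖q‖ / c := by
  set I : Finset (Fin m) := Finset.univ.filter (fun j => lam j ≠ 0) with hI
  have hmemI : ∀ j, j ∈ I ↔ lam j ≠ 0 := by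
    intro j; simp [hI]
  have hsum_ext : ∀ f : Fin m → ℝ, (∀ j ∉ I, f j = 0) →
      ∑ j : {j // j ∈ I}, f j.1 = ∑ j, f j := by
    intro f hf
    rw [Finset.sum_coe_sort I f]
    exact Finset.sum_subset (Finset.subset_univ I) (fun j _ hj => hf j hj)
  by_cases hne : I.Nonempty
  · have hterm : ∀ j, lam j * s j = 0 := by
      intro j
      exact (Finset.sum_eq_zero_iff_of_nonneg
        (fun j _ => mul_nonneg (hlam j) (hs j))).mp hcs j (Finset.mem_univ j)
    have hsI : ∀ j ∈ I, s j = 0 := by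
      intro j hj
      rcases mul_eq_zero.mp (hterm j) with h | h
      · exact absurd h ((hmemI j).mp hj)
      · exact h
    set v : EuclideanSpace ℝ {i // i ∈ I} := WithLp.toLp 2 (fun i => lam i.1) with hv
    have key := hsub I hne v
    have hcoord : ∀ i : {i // i ∈ I},
        (Matrix.toEuclideanLin
          (A.submatrix (fun i : {i // i ∈ I} => (i : Fin m)) fun i : {i // i ∈ I} => (i : Fin m))
          v) i = - q i.1 := by
      intro i
      have hAlam : (Matrix.toEuclideanLin A) lam i.1 = s i.1 - q i.1 := by
        have h : ((Matrix.toEuclideanLin A) lam + q) i.1 = s i.1 := by rw [hsys]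
        have h' : (Matrix.toEuclideanLin A) lam i.1 + q i.1 = s i.1 := by
          simpa using h
        linarith
      have h1 : (Matrix.toEuclideanLin
          (A.submatrix (fun i : {i // i ∈ I} => (i : Fin m)) fun i : {i // i ∈ I} => (i : Fin m))
          v) i = ∑ j : {j // j ∈ I}, A i.1 j.1 * lam j.1 := by
        simp [Matrix.toEuclideanLin_apply, Matrix.mulVec, dotProduct, hv]
      have h2 : (Matrix.toEuclideanLin A) lam i.1 = ∑ j, A i.1 j * lam j := by
        simp [Matrix.toEuclideanLin_apply, Matrix.mulVec, dotProduct]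
      have h3 : ∑ j : {j // j ∈ I}, A i.1 j.1 * lam j.1 = ∑ j, A i.1 j * lam j := by
        apply hsum_ext (fun j => A i.1 j * lam j)
        intro j hj
        have : lam j = 0 := by
          by_contra h; exact hj ((hmemI j).mpr h)
        simp [this]
      rw [h1, h3, ← h2, hAlam, hsI i.1 i.2]
      ring
    have hnv : ‖v‖ = ‖lam‖ := by
      rw [EuclideanSpace.norm_eq, EuclideanSpace.norm_eq]
      congr 1
      apply hsum_ext (fun j => ‖lam j‖ ^ 2)
      intro j hj
      have : lam j = 0 := by
        by_contra h; exact hj ((hmemI j).mpr h)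
      simp [this]
    have hnq : ‖Matrix.toEuclideanLin
          (A.submatrix (fun i : {i // i ∈ I} => (i : Fin m)) fun i : {i // i ∈ I} => (i : Fin m))
          v‖ ≤ ‖q‖ := by
      rw [EuclideanSpace.norm_eq, EuclideanSpace.norm_eq]
      apply Real.sqrt_le_sqrt
      calc ∑ i : {i // i ∈ I}, ‖(Matrix.toEuclideanLin
            (A.submatrix (fun i : {i // i ∈ I} => (i : Fin m)) fun i : {i // i ∈ I} => (i : Fin m))
            v) i‖ ^ 2 = ∑ i : {i // i ∈ I}, ‖q i.1‖ ^ 2 := by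
              apply Finset.sum_congr rfl
              intro i _
              rw [hcoord i]
              simp
        _ = ∑ i ∈ I, ‖q i‖ ^ 2 := Finset.sum_coe_sort I (fun i => ‖q i‖ ^ 2)
        _ ≤ ∑ i, ‖q i‖ ^ 2 := by
              apply Finset.sum_le_sum_of_subset_of_nonneg (Finset.subset_univ I)
              intro i _ _; positivity
    have hfin : c * ‖lam‖ ≤ ‖q‖ := by
      rw [← hnv]; exact key.trans hnq
    rw [le_div_iff₀ hc]
    linarith
  · have hlam0 : lam = 0 := by
      ext j
      by_contra h
      exact hne ⟨j, (hmemI j).mpr h⟩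
    have : ‖lam‖ = 0 := by
      rw [hlam0]; exact norm_zero
    rw [this]
    positivity

end
end
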